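/- For every m ≥ 3, n ≥ 3 and l ≥ −1, the chromatic symmetric functions satisfy X_{D(m, l, n)} = (m−1)·X_{T_{n, m+l}} − Σ_{k=1}^{m−2} X_{T_{n, l+k}}·X_{C_{m−k}}, where in the sum the cycle C_2 is identified with the path P_2 and T_{n,0} is identified with C_n. -/

import Mathlib

noncomputable section

open SimpleGraph

/-- The chromatic symmetric function of a finite simple graph, as a formal power
series in countably many commuting variables `x_0, x_1, x_2, …`: the coefficient of the
monomial `∏ i, x_i ^ d i` is the number of proper colourings `κ : V → ℕ` in which colour `i`
is used exactly `d i` times. -/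
def csf {V : Type} [Fintype V] (G : SimpleGraph V) : MvPowerSeries ℕ ℚ :=
  fun d => (Nat.card {κ : V → ℕ //
      (∀ u v : V, G.Adj u v → κ u ≠ κ v) ∧
      ∀ i : ℕ, Nat.card {v : V // κ v = i} = d i} : ℚ)

/-- The elementary symmetric function `e_k` as a formal power series. -/
def esym (k : ℕ) : MvPowerSeries ℕ ℚ :=
  fun d => if (∀ i ∈ d.support, d i = 1) ∧ (d.sum fun _ v => v) = k then 1 else 0

/-- `e_λ` for a partition `λ` given as a multiset of parts. -/
def esymM (μ : Multiset ℕ) : MvPowerSeries ℕ ℚ :=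
  (μ.map esym).prod

/-- A symmetric function is `e`-positive if it is a finite nonnegative linear combination
of the elementary symmetric functions `e_λ`, `λ` a partition (all parts positive). -/
def EPositive (f : MvPowerSeries ℕ ℚ) : Prop :=
  ∃ c : Multiset ℕ →₀ ℚ, (∀ μ, 0 ≤ c μ) ∧ (∀ μ ∈ c.support, 0 ∉ μ) ∧
    f = c.sum fun μ a => a • esymM μ

/-- The path `P_k` on `k` vertices. -/
def pathG (k : ℕ) : SimpleGraph (Fin k) :=
  SimpleGraph.fromRel (fun i j => (j : ℕ) = (i : ℕ) + 1)

/-- The cycle `C_m` on `m` vertices (for `m = 2` this is a single edge, i.e. `P_2`). -/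
def cycleG (m : ℕ) : SimpleGraph (Fin m) :=
  SimpleGraph.fromRel (fun i j => (j : ℕ) = ((i : ℕ) + 1) % m)

/-- Auxiliary relation for sun graphs: body relation on `Fin n`, plus rays
`P_{lam i}` attached at vertex `i`, the leaf `⟨i,0⟩` of ray `i` being joined to `i`. -/
def sunRel (n : ℕ) (lam : Fin n → ℕ) (body : Fin n → Fin n → Prop) :
    (Fin n ⊕ ((i : Fin n) × Fin (lam i))) → (Fin n ⊕ ((i : Fin n) × Fin (lam i))) → Prop
  | Sum.inl i, Sum.inl i' => body i i'
  | Sum.inl i, Sum.inr p => p.1 = i ∧ (p.2 : ℕ) = 0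
  | Sum.inr p, Sum.inr q => p.1 = q.1 ∧ (q.2 : ℕ) = (p.2 : ℕ) + 1
  | _, _ => False

/-- The sun graph `S(n; λ_1, …, λ_n)`: a cycle `C_n` with a path `P_{λ_i}` (a *ray*)
joined by an edge to the `i`-th cycle vertex, for each `i`. -/
def sunGraph (n : ℕ) (lam : Fin n → ℕ) :
    SimpleGraph (Fin n ⊕ ((i : Fin n) × Fin (lam i))) :=
  SimpleGraph.fromRel (sunRel n lam (fun i i' => (i' : ℕ) = ((i : ℕ) + 1) % n))

/-- The complete sun graph `S̄(n; λ_1, …, λ_n)`: as `sunGraph`, but with complete body `K_n`. -/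
def completeSunGraph (n : ℕ) (lam : Fin n → ℕ) :
    SimpleGraph (Fin n ⊕ ((i : Fin n) × Fin (lam i))) :=
  SimpleGraph.fromRel (sunRel n lam (fun i i' => i ≠ i'))

/-- The spider `S(μ_1, …, μ_d)`: `d` paths (legs) `P_{μ_i}`, each joined at a leaf to a
common centre vertex. -/
def spiderGraph (d : ℕ) (mu : Fin d → ℕ) :
    SimpleGraph (Unit ⊕ ((i : Fin d) × Fin (mu i))) :=
  SimpleGraph.fromRel (fun a b => match a, b with
    | Sum.inl _, Sum.inr p => (p.2 : ℕ) = 0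
    | Sum.inr p, Sum.inr q => p.1 = q.1 ∧ (q.2 : ℕ) = (p.2 : ℕ) + 1
    | _, _ => False)

/-- The graph obtained from a body graph `H` on `Fin n` by joining each body vertex `i`
by an edge to a chosen vertex `u i` of a graph `Gs i`. -/
def attachGraph {n : ℕ} {Vs : Fin n → Type} (H : SimpleGraph (Fin n))
    (Gs : ∀ i, SimpleGraph (Vs i)) (u : ∀ i, Vs i) :
    SimpleGraph (Fin n ⊕ ((i : Fin n) × Vs i)) :=
  SimpleGraph.fromRel (fun a b => match a, b with
    | Sum.inl i, Sum.inl i' => H.Adj i i'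
    | Sum.inl i, Sum.inr p => p.1 = i ∧ p.2 = u p.1
    | Sum.inr p, Sum.inr q => ∃ h : p.1 = q.1, (Gs q.1).Adj (h ▸ p.2) q.2
    | _, _ => False)

/-- `G` has a connected partition of type `μ`: a partition of the vertex set all of whose
blocks induce connected subgraphs, the multiset of block sizes being `μ`. -/
def HasConnectedPartition {V : Type} [Fintype V] [DecidableEq V]
    (G : SimpleGraph V) (μ : Multiset ℕ) : Prop :=
  ∃ P : Finpartition (Finset.univ : Finset V),
    (∀ p ∈ P.parts, (G.induce (↑p : Set V)).Connected) ∧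
      P.parts.val.map Finset.card = μ

/-- `G` has a perfect matching: a partition of `V(G)` into pairs of adjacent vertices. -/
def HasPerfectMatching {V : Type} (G : SimpleGraph V) : Prop :=
  ∃ M : G.Subgraph, M.IsPerfectMatching

/-- `G` has an almost perfect matching: a partition of `V(G)` into pairs of adjacent
vertices together with one singleton. -/
def HasAlmostPerfectMatching {V : Type} (G : SimpleGraph V) : Prop :=
  ∃ M : G.Subgraph, M.IsMatching ∧ ∃ v : V, M.verts = {v}ᶜ

/-- The tadpole graph `T_{m,l}`: the cycle `C_m` (vertices `0, …, m-1`, consecutive edges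
plus the chord `{0, m-1}`) with a path on `l` further vertices attached by an edge at
vertex `m-1`.  For `l = 0` this is just `C_m`. -/
def tadpole (m l : ℕ) : SimpleGraph (Fin (m + l)) :=
  SimpleGraph.fromRel (fun i j =>
    (j : ℕ) = (i : ℕ) + 1 ∨ ((i : ℕ) = 0 ∧ (j : ℕ) = m - 1))

/-- Dumbbell with path-parameter `t = l + 1 ≥ 0`: vertices `0, …, m-1` form the cycle `C_m`
(consecutive edges plus chord `{0, m-1}`), vertices `m+t-1, …, m+n+t-2` form the cycle `C_n`
(consecutive edges plus chord `{m+t-1, m+n+t-2}`), and the vertices in between form the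
connecting path; for `t = 0` (i.e. `l = -1`) the two cycles share the vertex `m-1`. -/
def dumbbellAux (m n t : ℕ) : SimpleGraph (Fin (m + n + t - 1)) :=
  SimpleGraph.fromRel (fun i j =>
    (j : ℕ) = (i : ℕ) + 1
      ∨ ((i : ℕ) = 0 ∧ (j : ℕ) = m - 1)
      ∨ ((i : ℕ) = m + t - 1 ∧ (j : ℕ) = m + n + t - 2))

/-- The dumbbell graph `D(m, l, n)` for `l ≥ -1`: cycles `C_m` and `C_n` joined by a path
on `l` vertices (for `l = 1` a single joining vertex, for `l = 0` a joining edge, and for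
`l = -1` the two cycles share a vertex). -/
def dumbbell (m n : ℕ) (l : ℤ) : SimpleGraph (Fin (m + n + (l + 1).toNat - 1)) :=
  dumbbellAux m n (l + 1).toNat

end

noncomputable section


noncomputable section
open SimpleGraph Finset


namespace CsfTools

variable {V W : Type} [Fintype V] [Fintype W]

/-- colour distribution of a colouring, as a finsupp -/
def distF (κ : V → ℕ) : ℕ →₀ ℕ := ∑ v, Finsupp.single (κ v) 1

lemma distF_apply (κ : V → ℕ) (i : ℕ) : distF κ i = Nat.card {v : V // κ v = i} := by
  classical
  rw [Nat.card_eq_fintype_card, Fintype.card_subtype, Finset.card_filter]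
  rw [distF, Finsupp.finset_sum_apply]
  refine Finset.sum_congr rfl fun v _ => ?_
  rw [Finsupp.single_apply]

lemma distF_comp_equiv (e : W ≃ V) (κ : V → ℕ) : distF (κ ∘ e) = distF κ := by
  simpa [distF] using e.sum_comp (fun v => Finsupp.single (κ v) 1)

lemma dist_iff_distF (κ : V → ℕ) (d : ℕ →₀ ℕ) :
    (∀ i : ℕ, Nat.card {v : V // κ v = i} = d i) ↔ distF κ = d := by
  constructor
  · intro h; ext i; rw [distF_apply]; exact h i
  · intro h i; rw [← distF_apply, h]

lemma finite_cnt (P : (V → ℕ) → Prop) (d : ℕ →₀ ℕ) :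
    Finite {κ : V → ℕ // P κ ∧ distF κ = d} := by
  classical
  have hsub : {κ : V → ℕ | P κ ∧ distF κ = d} ⊆
      (Set.univ : Set V).pi (fun _ => (d.support : Set ℕ)) := by
    intro κ hκ v _
    have h1 : distF κ (κ v) ≠ 0 := by
      rw [distF_apply]
      have : Nonempty {w : V // κ w = κ v} := ⟨⟨v, rfl⟩⟩
      simp [Nat.card_pos.ne']
    rw [hκ.2] at h1
    simpa using h1
  have : ((Set.univ : Set V).pi (fun _ => (d.support : Set ℕ))).Finite :=
    Set.Finite.pi (fun _ => (d.support : Set ℕ).toFinite)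
  exact (this.subset hsub)

/-- master bijection lemma -/
lemma bijCount (e : V ≃ W) (P : (V → ℕ) → Prop) (Q : (W → ℕ) → Prop)
    (h : ∀ κ : W → ℕ, P (κ ∘ e) ↔ Q κ) (d : ℕ →₀ ℕ) :
    Nat.card {μ : V → ℕ // P μ ∧ distF μ = d} =
      Nat.card {κ : W → ℕ // Q κ ∧ distF κ = d} := by
  apply Nat.card_congr
  refine Equiv.subtypeEquiv (Equiv.arrowCongr e (Equiv.refl ℕ)) ?_
  intro μ
  have h1 : (Equiv.arrowCongr e (Equiv.refl ℕ)) μ = μ ∘ e.symm := rfl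
  rw [h1]
  have h2 := h (μ ∘ e.symm)
  have h3 : (μ ∘ e.symm) ∘ e = μ := by ext v; simp
  rw [h3] at h2
  rw [h2, distF_comp_equiv e.symm μ]

lemma cnt_split (P B : (V → ℕ) → Prop) (d : ℕ →₀ ℕ) :
    Nat.card {κ : V → ℕ // P κ ∧ distF κ = d} =
      Nat.card {κ : V → ℕ // (P κ ∧ B κ) ∧ distF κ = d} +
      Nat.card {κ : V → ℕ // (P κ ∧ ¬ B κ) ∧ distF κ = d} := by
  classical
  have e : {κ : V → ℕ // P κ ∧ distF κ = d} ≃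
      {κ : V → ℕ // (P κ ∧ B κ) ∧ distF κ = d} ⊕
      {κ : V → ℕ // (P κ ∧ ¬ B κ) ∧ distF κ = d} :=
    { toFun := fun x => if hb : B x.1 then Sum.inl ⟨x.1, ⟨x.2.1, hb⟩, x.2.2⟩
        else Sum.inr ⟨x.1, ⟨x.2.1, hb⟩, x.2.2⟩
      invFun := fun x => x.elim (fun y => ⟨y.1, y.2.1.1, y.2.2⟩) (fun y => ⟨y.1, y.2.1.1, y.2.2⟩)
      left_inv := fun x => by by_cases hb : B x.1 <;> simp [hb]
      right_inv := fun x => by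
        rcases x with y | y
        · have := y.2.1.2; simp [this]
        · have := y.2.1.2; simp [this] }
  rw [Nat.card_congr e]
  have : Finite {κ : V → ℕ // (P κ ∧ B κ) ∧ distF κ = d} := finite_cnt _ d
  have : Finite {κ : V → ℕ // (P κ ∧ ¬ B κ) ∧ distF κ = d} := finite_cnt _ d
  exact Nat.card_sum

lemma cnt_zero (P : (V → ℕ) → Prop) (d : ℕ →₀ ℕ) (h : ∀ κ, ¬ P κ) :
    Nat.card {κ : V → ℕ // P κ ∧ distF κ = d} = 0 := by
  have : IsEmpty {κ : V → ℕ // P κ ∧ distF κ = d} :=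
    ⟨fun x => h x.1 x.2.1⟩
  simp

lemma nat_card_sigma {ι : Type*} [Fintype ι] (f : ι → Type*) [∀ i, Finite (f i)] :
    Nat.card (Σ i, f i) = ∑ i, Nat.card (f i) := by
  letI : ∀ i, Fintype (f i) := fun i => Fintype.ofFinite _
  simp [Nat.card_eq_fintype_card, Fintype.card_sigma]

lemma distF_sum (κ : V ⊕ W → ℕ) :
    distF κ = distF (κ ∘ Sum.inl) + distF (κ ∘ Sum.inr) := by
  simp [distF, Fintype.sum_sum_type]

/-- product / disjoint-union lemma -/
lemma cnt_prod (P1 : (V → ℕ) → Prop) (P2 : (W → ℕ) → Prop) (d : ℕ →₀ ℕ) :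
    Nat.card {κ : V ⊕ W → ℕ // (P1 (κ ∘ Sum.inl) ∧ P2 (κ ∘ Sum.inr)) ∧ distF κ = d} =
      ∑ p ∈ Finset.HasAntidiagonal.antidiagonal d,
        Nat.card {κ1 : V → ℕ // P1 κ1 ∧ distF κ1 = p.1} *
        Nat.card {κ2 : W → ℕ // P2 κ2 ∧ distF κ2 = p.2} := by
  classical
  have key : Nat.card {κ : V ⊕ W → ℕ // (P1 (κ ∘ Sum.inl) ∧ P2 (κ ∘ Sum.inr)) ∧ distF κ = d}
      = Nat.card (Σ p : (Finset.HasAntidiagonal.antidiagonal d : Finset _),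
          {κ1 : V → ℕ // P1 κ1 ∧ distF κ1 = p.1.1} ×
          {κ2 : W → ℕ // P2 κ2 ∧ distF κ2 = p.1.2}) := by
    apply Nat.card_congr
    apply Equiv.symm
    apply Equiv.ofBijective (f := fun x =>
      (⟨Sum.elim x.2.1.1 x.2.2.1, ⟨by
          have h1 := x.2.1.2.1
          have h2 := x.2.2.2.1
          constructor
          · simpa using h1
          · simpa using h2, by
          rw [distF_sum]
          have h1 := x.2.1.2.2
          have h2 := x.2.2.2.2
          have h3 : (Sum.elim x.2.1.1 x.2.2.1 : V ⊕ W → ℕ) ∘ Sum.inl = x.2.1.1 := rfl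
          have h4 : (Sum.elim x.2.1.1 x.2.2.1 : V ⊕ W → ℕ) ∘ Sum.inr = x.2.2.1 := rfl
          rw [h3, h4, h1, h2]
          try exact (Finset.HasAntidiagonal.mem_antidiagonal.mp x.1.2)⟩⟩ :
        {κ : V ⊕ W → ℕ // (P1 (κ ∘ Sum.inl) ∧ P2 (κ ∘ Sum.inr)) ∧ distF κ = d}))
    constructor
    · rintro ⟨⟨p, hp⟩, ⟨κ1, h1⟩, ⟨κ2, h2⟩⟩ ⟨⟨p', hp'⟩, ⟨κ1', h1'⟩, ⟨κ2', h2'⟩⟩ heq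
      simp only [Subtype.mk.injEq] at heq
      have e1 : κ1 = κ1' := by
        funext v; exact congrFun heq (Sum.inl v)
      have e2 : κ2 = κ2' := by
        funext w; exact congrFun heq (Sum.inr w)
      subst e1; subst e2
      have : p = p' := by
        have := h1.2; have := h1'.2
        ext1
        · rw [← h1.2, ← h1'.2]
        · rw [← h2.2, ← h2'.2]
      subst this
      rfl
    · rintro ⟨κ, ⟨hP1, hP2⟩, hd⟩
      refine ⟨⟨⟨(distF (κ ∘ Sum.inl), distF (κ ∘ Sum.inr)), ?_⟩,
        ⟨⟨κ ∘ Sum.inl, hP1, rfl⟩, ⟨κ ∘ Sum.inr, hP2, rfl⟩⟩⟩, ?_⟩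
      · rw [Finset.HasAntidiagonal.mem_antidiagonal, ← distF_sum, hd]
      · ext x
        cases x <;> rfl
  rw [key]
  have : ∀ p : (Finset.HasAntidiagonal.antidiagonal d : Finset _),
      Finite ({κ1 : V → ℕ // P1 κ1 ∧ distF κ1 = p.1.1} ×
          {κ2 : W → ℕ // P2 κ2 ∧ distF κ2 = p.1.2}) := by
    intro p
    have := finite_cnt (V := V) P1 p.1.1
    have := finite_cnt (V := W) P2 p.1.2
    infer_instance
  rw [nat_card_sigma]
  rw [← Finset.sum_coe_sort (Finset.HasAntidiagonal.antidiagonal d)]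
  exact Finset.sum_congr rfl fun p _ => Nat.card_prod _ _


/-- the natural-number valued colouring lookup -/
def get {N : ℕ} (κ : Fin N → ℕ) (x : ℕ) : ℕ := if h : x < N then κ ⟨x, h⟩ else 0

lemma get_val {N : ℕ} (κ : Fin N → ℕ) (u : Fin N) : get κ (u : ℕ) = κ u := by
  simp [get, u.isLt]

lemma get_lt {N : ℕ} (κ : Fin N → ℕ) (x : ℕ) (hx : x < N) :
    get κ x = κ ⟨x, hx⟩ := by simp [get, hx]

/-- properness over ℕ indices -/
def PrG {N : ℕ} (R : ℕ → ℕ → Prop) (κ : Fin N → ℕ) : Prop :=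
  ∀ x y : ℕ, x < N → y < N → R x y → x ≠ y → get κ x ≠ get κ y

lemma proper_iff {N : ℕ} (R : ℕ → ℕ → Prop) (κ : Fin N → ℕ) :
    (∀ u v : Fin N, (SimpleGraph.fromRel fun i j : Fin N => R (i : ℕ) (j : ℕ)).Adj u v → κ u ≠ κ v)
      ↔ PrG R κ := by
  constructor
  · intro h x y hx hy hR hxy
    rw [get_lt κ x hx, get_lt κ y hy]
    refine h _ _ ?_
    rw [SimpleGraph.fromRel_adj]
    exact ⟨fun hc => hxy (by simpa using hc), Or.inl hR⟩
  · intro h u v hadj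
    rw [SimpleGraph.fromRel_adj] at hadj
    obtain ⟨hne, hor⟩ := hadj
    have hval : (u : ℕ) ≠ (v : ℕ) := fun hc => hne (Fin.ext hc)
    rcases hor with hr | hr
    · have := h u v u.isLt v.isLt hr hval
      rwa [get_val, get_val] at this
    · have := h v u v.isLt u.isLt hr hval.symm
      rw [get_val, get_val] at this
      exact this.symm

lemma csf_cnt {N : ℕ} (R : ℕ → ℕ → Prop) (d : ℕ →₀ ℕ) :
    csf (SimpleGraph.fromRel fun i j : Fin N => R (i : ℕ) (j : ℕ)) d
      = (Nat.card {κ : Fin N → ℕ // PrG R κ ∧ distF κ = d} : ℚ) := by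
  have : csf (SimpleGraph.fromRel fun i j : Fin N => R (i : ℕ) (j : ℕ)) d
      = (Nat.card {κ : Fin N → ℕ //
          (∀ u v, (SimpleGraph.fromRel fun i j : Fin N => R (i : ℕ) (j : ℕ)).Adj u v → κ u ≠ κ v) ∧
          ∀ i : ℕ, Nat.card {v // κ v = i} = d i} : ℚ) := rfl
  rw [this]
  congr 1
  apply Nat.card_congr
  exact Equiv.subtypeEquivRight fun κ =>
    and_congr (proper_iff R κ) (dist_iff_distF κ d)

/-- builder for equivalences of Fin types from ℕ data -/
def mkEquiv {a b : ℕ} (f g : ℕ → ℕ) (hf : ∀ x, x < a → f x < b) (hg : ∀ y, y < b → g y < a)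
    (h1 : ∀ x, x < a → g (f x) = x) (h2 : ∀ y, y < b → f (g y) = y) : Fin a ≃ Fin b where
  toFun x := ⟨f x, hf x x.isLt⟩
  invFun y := ⟨g y, hg y y.isLt⟩
  left_inv x := Fin.ext (h1 x x.isLt)
  right_inv y := Fin.ext (h2 y y.isLt)

lemma get_comp_mkEquiv {a b : ℕ} (f g : ℕ → ℕ) (hf : ∀ x, x < a → f x < b)
    (hg : ∀ y, y < b → g y < a) (h1 : ∀ x, x < a → g (f x) = x) (h2 : ∀ y, y < b → f (g y) = y)
    (κ : Fin b → ℕ) (x : ℕ) (hx : x < a) :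
    get (κ ∘ mkEquiv f g hf hg h1 h2) x = get κ (f x) := by
  rw [get_lt _ x hx, get_lt _ (f x) (hf x hx)]
  rfl


section Core

variable {m n t N : ℕ}

/-- tail+end-cycle graph relation (reversed tadpole on all of `Fin N`) -/
def relT (m n t : ℕ) : ℕ → ℕ → Prop :=
  fun x y => y = x + 1 ∨ (x = m + t - 1 ∧ y = m + n + t - 2)

def relD (m n t : ℕ) : ℕ → ℕ → Prop :=
  fun x y => y = x + 1 ∨ ((x = 0 ∧ y = m - 1) ∨ (x = m + t - 1 ∧ y = m + n + t - 2))

def relH (m n t q : ℕ) : ℕ → ℕ → Prop :=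
  fun x y => (y = x + 1 ∧ y ≠ q) ∨ ((x = 0 ∧ y = q - 1) ∨ (x = m + t - 1 ∧ y = m + n + t - 2))

def relTad (n : ℕ) : ℕ → ℕ → Prop :=
  fun x y => y = x + 1 ∨ (x = 0 ∧ y = n - 1)

def relC (q : ℕ) : ℕ → ℕ → Prop := fun x y => y = (x + 1) % q

def Sq (m n t N q : ℕ) (d : ℕ →₀ ℕ) : ℕ :=
  Nat.card {κ : Fin N → ℕ //
    (PrG (relT m n t) κ ∧ get κ 0 = get κ (q - 1)) ∧ distF κ = d}

variable (hm : 3 ≤ m) (hn : 3 ≤ n) (hN : N = m + n + t - 1)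
include hm hn hN

lemma iffD (κ : Fin N → ℕ) :
    PrG (relD m n t) κ ↔ (PrG (relT m n t) κ ∧ get κ 0 ≠ get κ (m - 1)) := by
  constructor
  · intro h
    constructor
    · intro x y hx hy hR hxy
      refine h x y hx hy ?_ hxy
      rcases hR with h1 | h1
      · exact Or.inl h1
      · exact Or.inr (Or.inr h1)
    · exact h 0 (m-1) (by omega) (by omega) (Or.inr (Or.inl ⟨rfl, rfl⟩)) (by omega)
  · rintro ⟨hT, hne⟩ x y hx hy hR hxy
    rcases hR with h1 | ⟨h1, h2⟩ | h1
    · exact hT x y hx hy (Or.inl h1) hxy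
    · subst h1; subst h2; exact hne
    · exact hT x y hx hy (Or.inr h1) hxy

lemma lemA (d : ℕ →₀ ℕ) :
    Nat.card {κ : Fin N → ℕ // PrG (relD m n t) κ ∧ distF κ = d} + Sq m n t N m d
      = Nat.card {κ : Fin N → ℕ // PrG (relT m n t) κ ∧ distF κ = d} := by
  have h := cnt_split (V := Fin N) (PrG (relT m n t)) (fun κ => get κ 0 = get κ (m - 1)) d
  have h2 : Nat.card {κ : Fin N → ℕ //
        (PrG (relT m n t) κ ∧ ¬ (get κ 0 = get κ (m - 1))) ∧ distF κ = d}
      = Nat.card {κ : Fin N → ℕ // PrG (relD m n t) κ ∧ distF κ = d} := by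
    apply Nat.card_congr
    refine Equiv.subtypeEquivRight fun κ => and_congr_left' ?_
    exact ((iffD hm hn hN κ)).symm
  rw [h, h2]
  have h3 : Nat.card {κ : Fin N → ℕ //
        (PrG (relT m n t) κ ∧ get κ 0 = get κ (m - 1)) ∧ distF κ = d} = Sq m n t N m d := rfl
  rw [h3]
  omega

lemma lemC (d : ℕ →₀ ℕ) : Sq m n t N 2 d = 0 := by
  apply cnt_zero
  rintro κ ⟨hT, he⟩
  exact hT 0 1 (by omega) (by omega) (Or.inl rfl) (by omega) he

lemma iffH (q : ℕ) (h2 : 2 ≤ q) (hq : q ≤ m - 1) (κ : Fin N → ℕ) :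
    (PrG (relH m n t q) κ ∧ ¬ (get κ (q-1) = get κ q)) ↔
      (PrG (relT m n t) κ ∧ ¬ (get κ 0 = get κ (q-1))) := by
  constructor
  · rintro ⟨hH, hne⟩
    constructor
    · intro x y hx hy hR hxy
      rcases hR with h1 | h1
      · by_cases hyq : y = q
        · have ex : x = q - 1 := by omega
          rw [ex, hyq]
          exact hne
        · exact hH x y hx hy (Or.inl ⟨h1, hyq⟩) hxy
      · exact hH x y hx hy (Or.inr (Or.inr h1)) hxy
    · exact hH 0 (q-1) (by omega) (by omega) (Or.inr (Or.inl ⟨rfl, rfl⟩)) (by omega)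
  · rintro ⟨hT, hne⟩
    constructor
    · intro x y hx hy hR hxy
      rcases hR with ⟨h1, _⟩ | ⟨h1, h2'⟩ | h1
      · exact hT x y hx hy (Or.inl h1) hxy
      · subst h1; subst h2'; exact hne
      · exact hT x y hx hy (Or.inr h1) hxy
    · have : q - 1 + 1 = q := by omega
      exact hT (q-1) q (by omega) (by omega) (Or.inl this.symm) (by omega)

/-- rotation function on the initial block `[0, q-1]` -/
def rot (q : ℕ) : ℕ → ℕ := fun x => if x = q - 1 then 0 else if x < q - 1 then x + 1 else x

def rot' (q : ℕ) : ℕ → ℕ := fun x => if x = 0 then q - 1 else if x < q then x - 1 else x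

lemma lemB2 (q : ℕ) (h2 : 2 ≤ q) (hq : q ≤ m - 1) (d : ℕ →₀ ℕ) :
    Nat.card {κ : Fin N → ℕ //
        (PrG (relH m n t q) κ ∧ get κ (q-1) = get κ q) ∧ distF κ = d}
      = Sq m n t N (q+1) d := by
  have hf : ∀ x, x < N → rot q x < N := by
    intro x hx; unfold rot; split_ifs <;> first | contradiction | omega
  have hg : ∀ x, x < N → rot' q x < N := by
    intro x hx; unfold rot'; split_ifs <;> first | contradiction | omega
  have h1 : ∀ x, x < N → rot' q (rot q x) = x := by
    intro x hx; unfold rot rot'; split_ifs <;> first | contradiction | omega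
  have h2' : ∀ x, x < N → rot q (rot' q x) = x := by
    intro x hx; unfold rot rot'; split_ifs <;> first | contradiction | omega
  apply bijCount (mkEquiv (rot q) (rot' q) hf hg h1 h2')
  intro κ
  have hget : ∀ x, x < N → get (κ ∘ mkEquiv (rot q) (rot' q) hf hg h1 h2') x
      = get κ (rot q x) := get_comp_mkEquiv _ _ _ _ _ _ κ
  have hrot : ∀ x, x < N → x ≠ q - 1 → x < q - 1 → rot q x = x + 1 := by
    intro x _ hne hlt; unfold rot; split_ifs <;> first | contradiction | omega
  have hrotv : ∀ x, rot q x = if x = q - 1 then 0 else if x < q - 1 then x + 1 else x := fun x => rfl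
  have hq1N : q - 1 < N := by omega
  have hqN : q < N := by omega
  have e1 : get (κ ∘ mkEquiv (rot q) (rot' q) hf hg h1 h2') (q-1) = get κ 0 := by
    rw [hget (q-1) hq1N]
    congr 1
    unfold rot; split_ifs <;> first | contradiction | omega
  have e2 : get (κ ∘ mkEquiv (rot q) (rot' q) hf hg h1 h2') q = get κ q := by
    rw [hget q hqN]
    congr 1
    unfold rot; split_ifs <;> first | contradiction | omega
  constructor
  · rintro ⟨hH, he⟩
    rw [e1, e2] at he
    have hQ : q + 1 - 1 = q := by omega
    refine ⟨?_, by rw [hQ]; exact he⟩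
    -- show PrG relT κ
    intro x y hx hy hR hxy
    rcases hR with h1 | ⟨hc1, hc2⟩
    · -- y = x + 1
      subst h1
      by_cases hx0 : x = 0
      · -- use chord clause of H at (0, q-1)
        subst hx0
        have := hH 0 (q-1) (by omega) (by omega) (Or.inr (Or.inl ⟨rfl, rfl⟩)) (by omega)
        rw [hget 0 (by omega), hget (q-1) hq1N] at this
        have g0 : rot q 0 = 1 := by unfold rot; split_ifs <;> first | contradiction | omega
        have gq1 : rot q (q-1) = 0 := by unfold rot; split_ifs <;> first | contradiction | omega
        rw [g0, gq1] at this
        have h01 : (0:ℕ) + 1 = 1 := rfl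
        rw [h01]
        exact this.symm
      · by_cases hxa : x + 1 ≤ q - 1
        · -- interior: use H consecutive at (x-1, x)
          have := hH (x-1) x (by omega) (by omega)
            (Or.inl ⟨by omega, by omega⟩) (by omega)
          rw [hget (x-1) (by omega), hget x (by omega)] at this
          have ga : rot q (x-1) = x := by unfold rot; split_ifs <;> first | contradiction | omega
          have gb : rot q x = x + 1 := by unfold rot; split_ifs <;> first | contradiction | omega
          rwa [ga, gb] at this
        · by_cases hxb : x = q - 1
          · -- pair (q-1, q): use H consecutive at (q-2, q-1) and he
            subst hxb
            have := hH (q-2) (q-1) (by omega) (by omega)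
              (Or.inl ⟨by omega, by omega⟩) (by omega)
            rw [hget (q-2) (by omega), hget (q-1) hq1N] at this
            have ga : rot q (q-2) = q - 1 := by unfold rot; split_ifs <;> first | contradiction | omega
            have gb : rot q (q-1) = 0 := by unfold rot; split_ifs <;> first | contradiction | omega
            rw [ga, gb] at this
            have : get κ (q-1) ≠ get κ q := by rwa [he] at this
            have hy1 : q - 1 + 1 = q := by omega
            rwa [hy1]
          · -- x ≥ q
            have hxq : q ≤ x := by omega
            have := hH x (x+1) hx hy (Or.inl ⟨rfl, by omega⟩) (by omega)
            rw [hget x hx, hget (x+1) hy] at this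
            have ga : rot q x = x := by unfold rot; split_ifs <;> first | contradiction | omega
            have gb : rot q (x+1) = x + 1 := by unfold rot; split_ifs <;> first | contradiction | omega
            rwa [ga, gb] at this
    · -- end chord
      subst hc1; subst hc2
      have := hH (m+t-1) (m+n+t-2) (by omega) (by omega)
        (Or.inr (Or.inr ⟨rfl, rfl⟩)) (by omega)
      rw [hget (m+t-1) (by omega), hget (m+n+t-2) (by omega)] at this
      have ga : rot q (m+t-1) = m+t-1 := by unfold rot; split_ifs <;> first | contradiction | omega
      have gb : rot q (m+n+t-2) = m+n+t-2 := by unfold rot; split_ifs <;> first | contradiction | omega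
      rwa [ga, gb] at this
  · rintro ⟨hT, he⟩
    have hQ : q + 1 - 1 = q := by omega
    rw [hQ] at he
    refine ⟨?_, by rw [e1, e2]; exact he⟩
    intro x y hx hy hR hxy
    rw [hget x hx, hget y hy]
    rcases hR with ⟨h1, hyq⟩ | ⟨hc1, hc2⟩ | ⟨hc1, hc2⟩
    · subst h1
      by_cases hxa : x + 1 ≤ q - 2
      · have ga : rot q x = x + 1 := by unfold rot; split_ifs <;> first | contradiction | omega
        have gb : rot q (x+1) = x + 2 := by unfold rot; split_ifs <;> first | contradiction | omega
        rw [ga, gb]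
        exact hT (x+1) (x+2) (by omega) (by omega) (Or.inl rfl) (by omega)
      · by_cases hxb : x + 1 = q - 1
        · have ga : rot q x = q - 1 := by unfold rot; split_ifs <;> first | contradiction | omega
          have gb : rot q (x+1) = 0 := by unfold rot; split_ifs <;> first | contradiction | omega
          rw [ga, gb]
          have := hT (q-1) q (by omega) (by omega) (Or.inl (by omega)) (by omega)
          rw [← he] at this
          exact this
        · -- x ≥ q  (x = q-1 would force y = q, excluded)
          have hxq : q ≤ x := by omega
          have ga : rot q x = x := by unfold rot; split_ifs <;> first | contradiction | omega
          have gb : rot q (x+1) = x + 1 := by unfold rot; split_ifs <;> first | contradiction | omega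
          rw [ga, gb]
          exact hT x (x+1) hx hy (Or.inl rfl) (by omega)
    · subst hc1; subst hc2
      have ga : rot q 0 = 1 := by unfold rot; split_ifs <;> first | contradiction | omega
      have gb : rot q (q-1) = 0 := by unfold rot; split_ifs <;> first | contradiction | omega
      rw [ga, gb]
      exact (hT 0 1 (by omega) (by omega) (Or.inl rfl) (by omega)).symm
    · subst hc1; subst hc2
      have ga : rot q (m+t-1) = m+t-1 := by unfold rot; split_ifs <;> first | contradiction | omega
      have gb : rot q (m+n+t-2) = m+n+t-2 := by unfold rot; split_ifs <;> first | contradiction | omega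
      rw [ga, gb]
      exact hT _ _ hx hy (Or.inr ⟨rfl, rfl⟩) hxy

lemma lemB (q : ℕ) (h2 : 2 ≤ q) (hq : q ≤ m - 1) (d : ℕ →₀ ℕ) :
    Nat.card {κ : Fin N → ℕ // PrG (relH m n t q) κ ∧ distF κ = d} + Sq m n t N q d
      = Nat.card {κ : Fin N → ℕ // PrG (relT m n t) κ ∧ distF κ = d} + Sq m n t N (q+1) d := by
  have hH := cnt_split (V := Fin N) (PrG (relH m n t q)) (fun κ => get κ (q-1) = get κ q) d
  have hT := cnt_split (V := Fin N) (PrG (relT m n t)) (fun κ => get κ 0 = get κ (q-1)) d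
  have h3 : Nat.card {κ : Fin N → ℕ //
        (PrG (relH m n t q) κ ∧ ¬ (get κ (q-1) = get κ q)) ∧ distF κ = d}
      = Nat.card {κ : Fin N → ℕ //
        (PrG (relT m n t) κ ∧ ¬ (get κ 0 = get κ (q-1))) ∧ distF κ = d} := by
    apply Nat.card_congr
    exact Equiv.subtypeEquivRight fun κ => and_congr_left' (iffH hm hn hN q h2 hq κ)
  have h4 := lemB2 hm hn hN q h2 hq d
  have h5 : Nat.card {κ : Fin N → ℕ //
        (PrG (relT m n t) κ ∧ get κ 0 = get κ (q-1)) ∧ distF κ = d} = Sq m n t N q d := rfl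
  omega

lemma telescope (d : ℕ →₀ ℕ) :
    Nat.card {κ : Fin N → ℕ // PrG (relD m n t) κ ∧ distF κ = d}
      + ∑ k ∈ Finset.Icc 1 (m-2),
          Nat.card {κ : Fin N → ℕ // PrG (relH m n t (m-k)) κ ∧ distF κ = d}
      = (m - 1) * Nat.card {κ : Fin N → ℕ // PrG (relT m n t) κ ∧ distF κ = d} := by
  set cT := Nat.card {κ : Fin N → ℕ // PrG (relT m n t) κ ∧ distF κ = d} with hcT
  have main : ∀ j, j ≤ m - 2 →
      Nat.card {κ : Fin N → ℕ // PrG (relD m n t) κ ∧ distF κ = d}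
        + ∑ k ∈ Finset.Icc 1 j,
            Nat.card {κ : Fin N → ℕ // PrG (relH m n t (m-k)) κ ∧ distF κ = d}
        + Sq m n t N (m-j) d = (j+1) * cT := by
    intro j
    induction j with
    | zero =>
      intro _
      simp only [Finset.Icc_eq_empty_of_lt (by omega : (1:ℕ) > 0), Finset.sum_empty]
      have := lemA hm hn hN d
      simpa using this
    | succ j ih =>
      intro hj
      have hij := ih (by omega)
      rw [Finset.sum_Icc_succ_top (by omega : 1 ≤ j + 1)]
      have hB := lemB hm hn hN (m - (j+1)) (by omega) (by omega) d
      have hidx : m - (j+1) + 1 = m - j := by omega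
      rw [hidx] at hB
      have hmul : (j + 1 + 1) * cT = (j + 1) * cT + cT := by ring
      omega
  have := main (m-2) (le_refl _)
  have hS2 : Sq m n t N (m - (m-2)) d = 0 := by
    have : m - (m - 2) = 2 := by omega
    rw [this]
    exact lemC hm hn hN d
  rw [hS2] at this
  have hm1 : m - 2 + 1 = m - 1 := by omega
  rw [hm1] at this
  omega

end Core
end CsfTools
namespace CsfTools

section Iso

variable {m n t N : ℕ}
variable (hm : 3 ≤ m) (hn : 3 ≤ n) (hN : N = m + n + t - 1)
include hm hn hN

/-- the reversal: tadpole on `Fin (n+L)` vs `relT` on `Fin N` -/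
lemma lemE (L : ℕ) (hL : n + L = N) (d : ℕ →₀ ℕ) :
    Nat.card {κ : Fin (n + L) → ℕ // PrG (relTad n) κ ∧ distF κ = d}
      = Nat.card {κ : Fin N → ℕ // PrG (relT m n t) κ ∧ distF κ = d} := by
  have hNpos : 0 < N := by omega
  have hf : ∀ x, x < n + L → N - 1 - x < N := by omega
  have hg : ∀ y, y < N → N - 1 - y < n + L := by omega
  have h1 : ∀ x, x < n + L → N - 1 - (N - 1 - x) = x := by omega
  have h2 : ∀ y, y < N → N - 1 - (N - 1 - y) = y := by omega
  apply bijCount (mkEquiv (fun x => N - 1 - x) (fun y => N - 1 - y) hf hg h1 h2)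
  intro κ
  have hget : ∀ x, x < n + L →
      get (κ ∘ mkEquiv (fun x => N - 1 - x) (fun y => N - 1 - y) hf hg h1 h2) x
        = get κ (N - 1 - x) := get_comp_mkEquiv _ _ _ _ _ _ κ
  constructor
  · intro hTad x y hx hy hR hxy
    rcases hR with h' | ⟨hc1, hc2⟩
    · subst h'
      have := hTad (N-1-(x+1)) (N-1-x) (by omega) (by omega) (Or.inl (by omega)) (by omega)
      rw [hget _ (by omega), hget _ (by omega)] at this
      have e1 : N - 1 - (N-1-(x+1)) = x + 1 := by omega
      have e2 : N - 1 - (N-1-x) = x := by omega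
      rw [e1, e2] at this
      exact this.symm
    · subst hc1; subst hc2
      have := hTad 0 (n-1) (by omega) (by omega) (Or.inr ⟨rfl, rfl⟩) (by omega)
      rw [hget _ (by omega), hget _ (by omega)] at this
      have e1 : N - 1 - 0 = m + n + t - 2 := by omega
      have e2 : N - 1 - (n - 1) = m + t - 1 := by omega
      rw [e1, e2] at this
      exact this.symm
  · intro hT x y hx hy hR hxy
    rw [hget x hx, hget y hy]
    rcases hR with h' | ⟨hc1, hc2⟩
    · subst h'
      have := hT (N-1-(x+1)) (N-1-x) (by omega) (by omega) (Or.inl (by omega)) (by omega)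
      exact this.symm
    · subst hc1; subst hc2
      have := hT (m+t-1) (m+n+t-2) (by omega) (by omega) (Or.inr ⟨rfl, rfl⟩) (by omega)
      have e1 : N - 1 - 0 = m + n + t - 2 := by omega
      have e2 : N - 1 - (n - 1) = m + t - 1 := by omega
      rw [e1, e2]
      exact this.symm

end Iso

section Prod

/-- block embedding of a disjoint union into `Fin N`: the second block is laid out
reversed at the top. -/
def sumE (Rr q N : ℕ) (hsum : q + Rr = N) (hR : 0 < Rr) : (Fin Rr ⊕ Fin q) ≃ Fin N where
  toFun x := match x with
    | .inl b => ⟨N - 1 - (b : ℕ), by omega⟩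
    | .inr a => ⟨(a : ℕ), by have := a.isLt; omega⟩
  invFun y := if h : (y : ℕ) < q then .inr ⟨(y : ℕ), h⟩
    else .inl ⟨N - 1 - (y : ℕ), by have := y.isLt; omega⟩
  left_inv := by
    rintro (b | a)
    · have hb := b.isLt
      have hcond : ¬ (N - 1 - (b : ℕ) < q) := by omega
      simp only [hcond, dif_neg, not_false_iff]
      congr 1
      exact Fin.ext (by simp; omega)
    · have ha := a.isLt
      simp only [dif_pos (by omega : (a : ℕ) < q)]
  right_inv := by
    intro y
    have hy := y.isLt
    by_cases hc : (y : ℕ) < q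
    · simp only [dif_pos hc]
    · simp only [dif_neg hc]
      exact Fin.ext (by simp; omega)

variable {m n t N : ℕ}
variable (hm : 3 ≤ m) (hn : 3 ≤ n) (hN : N = m + n + t - 1)
include hm hn hN

lemma lemD (q Lk : ℕ) (h2 : 2 ≤ q) (hq : q ≤ m - 1) (hsum : q + (n + Lk) = N)
    (d : ℕ →₀ ℕ) :
    ∑ p ∈ Finset.HasAntidiagonal.antidiagonal d,
      Nat.card {κ1 : Fin (n + Lk) → ℕ // PrG (relTad n) κ1 ∧ distF κ1 = p.1} *
      Nat.card {κ2 : Fin q → ℕ // PrG (relC q) κ2 ∧ distF κ2 = p.2}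
    = Nat.card {κ : Fin N → ℕ // PrG (relH m n t q) κ ∧ distF κ = d} := by
  rw [← cnt_prod (V := Fin (n+Lk)) (W := Fin q) (PrG (relTad n)) (PrG (relC q)) d]
  have hRpos : 0 < n + Lk := by omega
  set e := sumE (n + Lk) q N hsum hRpos with he
  apply bijCount e
  intro κ
  have hgetl : ∀ x, x < n + Lk → get ((κ ∘ e) ∘ Sum.inl) x = get κ (N - 1 - x) := by
    intro x hx
    rw [get_lt _ x hx, get_lt _ (N - 1 - x) (by omega)]
    rfl
  have hgetr : ∀ x, x < q → get ((κ ∘ e) ∘ Sum.inr) x = get κ x := by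
    intro x hx
    rw [get_lt _ x hx, get_lt _ x (by omega)]
    rfl
  constructor
  · rintro ⟨hTad, hC⟩ x y hx hy hR hxy
    rcases hR with ⟨h1, hyq⟩ | ⟨hc1, hc2⟩ | ⟨hc1, hc2⟩
    · subst h1
      by_cases hxq : x + 1 ≤ q - 1
      · have := hC x (x+1) (by omega) (by omega)
          (by show x + 1 = (x + 1) % q; rw [Nat.mod_eq_of_lt (by omega)]) (by omega)
        rwa [hgetr _ (by omega), hgetr _ (by omega)] at this
      · -- x ≥ q
        have hxge : q ≤ x := by omega
        have := hTad (N-1-(x+1)) (N-1-x) (by omega) (by omega) (Or.inl (by omega)) (by omega)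
        rw [hgetl _ (by omega), hgetl _ (by omega)] at this
        have e1 : N - 1 - (N-1-(x+1)) = x + 1 := by omega
        have e2 : N - 1 - (N-1-x) = x := by omega
        rw [e1, e2] at this
        exact this.symm
    · subst hc1; subst hc2
      have := hC (q-1) 0 (by omega) (by omega)
        (by show (0:ℕ) = (q - 1 + 1) % q
            have : q - 1 + 1 = q := by omega
            rw [this, Nat.mod_self]) (by omega)
      rw [hgetr _ (by omega), hgetr _ (by omega)] at this
      exact this.symm
    · subst hc1; subst hc2
      have := hTad 0 (n-1) (by omega) (by omega) (Or.inr ⟨rfl, rfl⟩) (by omega)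
      rw [hgetl _ (by omega), hgetl _ (by omega)] at this
      have e1 : N - 1 - 0 = m + n + t - 2 := by omega
      have e2 : N - 1 - (n - 1) = m + t - 1 := by omega
      rw [e1, e2] at this
      exact this.symm
  · intro hH
    constructor
    · intro x y hx hy hR hxy
      rw [hgetl x hx, hgetl y hy]
      rcases hR with h1 | ⟨hc1, hc2⟩
      · subst h1
        have := hH (N-1-(x+1)) (N-1-x) (by omega) (by omega)
          (Or.inl ⟨by omega, by omega⟩) (by omega)
        exact this.symm
      · subst hc1; subst hc2
        have := hH (m+t-1) (m+n+t-2) (by omega) (by omega)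
          (Or.inr (Or.inr ⟨rfl, rfl⟩)) (by omega)
        have e1 : N - 1 - 0 = m + n + t - 2 := by omega
        have e2 : N - 1 - (n - 1) = m + t - 1 := by omega
        rw [e1, e2]
        exact this.symm
    · intro x y hx hy hR hxy
      rw [hgetr x hx, hgetr y hy]
      by_cases hxq : x + 1 < q
      · have hyx : y = x + 1 := by rw [hR, Nat.mod_eq_of_lt hxq]
        subst hyx
        exact hH x (x+1) (by omega) (by omega) (Or.inl ⟨rfl, by omega⟩) (by omega)
      · have hx1 : x + 1 = q := by omega
        have hy0 : y = 0 := by rw [hR, hx1, Nat.mod_self]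
        subst hy0
        have hxv : x = q - 1 := by omega
        subst hxv
        exact (hH 0 (q-1) (by omega) (by omega) (Or.inr (Or.inl ⟨rfl, rfl⟩)) (by omega)).symm

end Prod
end CsfTools

end

open CsfTools in
/-- For `m, n ≥ 3` and `l ≥ -1`:
`X_{D(m,l,n)} = (m-1)·X_{T_{n,m+l}} - Σ_{k=1}^{m-2} X_{T_{n,l+k}}·X_{C_{m-k}}`,
where `T_{n,0}` is identified with `C_n` and `C_2` with `P_2` (as they are in the
definitions of `tadpole` and `cycleG`). -/
theorem dumbbell_tadpole_expansion (m n : ℕ) (l : ℤ) (hm : 3 ≤ m) (hn : 3 ≤ n)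
    (hl : -1 ≤ l) :
    csf (dumbbell m n l) =
      ((m - 1 : ℕ) : MvPowerSeries ℕ ℚ) * csf (tadpole n ((m : ℤ) + l).toNat)
        - ∑ k ∈ Finset.Icc 1 (m - 2),
            csf (tadpole n (l + (k : ℤ)).toNat) * csf (cycleG (m - k)) := by
  classical
  have hNN : m + n + (l+1).toNat - 1 = m + n + (l+1).toNat - 1 := rfl
  set t : ℕ := (l + 1).toNat with ht
  set N : ℕ := m + n + t - 1 with hNdef
  apply MvPowerSeries.ext
  intro d
  -- left side
  have hD : MvPowerSeries.coeff d (csf (dumbbell m n l))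
      = ((Nat.card {κ : Fin N → ℕ // PrG (relD m n t) κ ∧ distF κ = d} : ℚ)) := by
    rw [MvPowerSeries.coeff_apply]
    exact csf_cnt (relD m n t) d
  -- tadpole T
  have hT : MvPowerSeries.coeff d (csf (tadpole n ((m : ℤ) + l).toNat))
      = ((Nat.card {κ : Fin N → ℕ // PrG (relT m n t) κ ∧ distF κ = d} : ℚ)) := by
    rw [MvPowerSeries.coeff_apply]
    have h1 : csf (tadpole n ((m : ℤ) + l).toNat) d
        = ((Nat.card {κ : Fin (n + ((m : ℤ) + l).toNat) → ℕ //
            PrG (relTad n) κ ∧ distF κ = d} : ℚ)) := csf_cnt (relTad n) d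
    rw [h1]
    congr 1
    exact lemE hm hn hNdef (((m : ℤ) + l).toNat) (by omega) d
  -- product terms
  have hP : ∀ k ∈ Finset.Icc 1 (m - 2),
      MvPowerSeries.coeff d (csf (tadpole n (l + (k : ℤ)).toNat) * csf (cycleG (m - k)))
        = ((Nat.card {κ : Fin N → ℕ // PrG (relH m n t (m - k)) κ ∧ distF κ = d} : ℚ)) := by
    intro k hk
    rw [Finset.mem_Icc] at hk
    rw [MvPowerSeries.coeff_mul]
    have hstep : ∀ p ∈ Finset.HasAntidiagonal.antidiagonal d,
        MvPowerSeries.coeff p.1 (csf (tadpole n (l + (k : ℤ)).toNat)) *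
          MvPowerSeries.coeff p.2 (csf (cycleG (m - k)))
        = ((Nat.card {κ1 : Fin (n + (l + (k : ℤ)).toNat) → ℕ //
              PrG (relTad n) κ1 ∧ distF κ1 = p.1} *
            Nat.card {κ2 : Fin (m - k) → ℕ //
              PrG (relC (m - k)) κ2 ∧ distF κ2 = p.2} : ℕ) : ℚ) := by
      intro p _
      rw [MvPowerSeries.coeff_apply, MvPowerSeries.coeff_apply]
      have e1 : csf (tadpole n (l + (k : ℤ)).toNat) p.1
          = ((Nat.card {κ1 : Fin (n + (l + (k : ℤ)).toNat) → ℕ //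
              PrG (relTad n) κ1 ∧ distF κ1 = p.1} : ℚ)) := csf_cnt (relTad n) p.1
      have e2 : csf (cycleG (m - k)) p.2
          = ((Nat.card {κ2 : Fin (m - k) → ℕ //
              PrG (relC (m - k)) κ2 ∧ distF κ2 = p.2} : ℚ)) := csf_cnt (relC (m - k)) p.2
      rw [e1, e2]
      push_cast
      ring
    rw [Finset.sum_congr rfl hstep]
    rw [← Nat.cast_sum]
    congr 1
    exact lemD hm hn hNdef (m - k) ((l + (k : ℤ)).toNat) (by omega) (by omega) (by omega) d
  -- right side assembled
  rw [map_sub, map_sum]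
  rw [Finset.sum_congr rfl hP]
  have hC : ((m - 1 : ℕ) : MvPowerSeries ℕ ℚ)
      = MvPowerSeries.C (σ := ℕ) (R := ℚ) (((m - 1 : ℕ) : ℚ)) := (map_natCast (MvPowerSeries.C (σ := ℕ) (R := ℚ)) (m-1)).symm
  rw [hC, MvPowerSeries.coeff_C_mul, hT, hD]
  -- the ℕ identity
  have hnat := telescope hm hn hNdef d
  have hq : ((Nat.card {κ : Fin N → ℕ // PrG (relD m n t) κ ∧ distF κ = d} : ℚ))
      + ∑ k ∈ Finset.Icc 1 (m - 2),
          ((Nat.card {κ : Fin N → ℕ // PrG (relH m n t (m - k)) κ ∧ distF κ = d} : ℚ))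
      = ((m - 1 : ℕ) : ℚ) *
          ((Nat.card {κ : Fin N → ℕ // PrG (relT m n t) κ ∧ distF κ = d} : ℚ)) := by
    exact_mod_cast congrArg (Nat.cast : ℕ → ℚ) hnat
  linarith [hq]
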